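/- Let E be a monoidal category with codiagonals, i.e. a natural transformation ∇_u : u ⊗ u → u compatible with the coherence isomorphisms. Then every E-graded monad (T_u, η, μ_{u,v}) on a category C induces an E-indexed monad with the same underlying functors: unit η̄_{u,A} = T_{!_u}(η_A) (reindexing of the graded unit), and multiplication μ̄_{u,A} = T_{∇_u}(A) ∘ μ_{u,u,A}; each (T_u, η̄_u, μ̄_u) is a monad on C. -/

import Mathlib

open CategoryTheory MonoidalCategory

/-- Let `E` be a monoidal category equipped with codiagonals `∇_u : u ⊗ u ⟶ u`
(natural and compatible with the coherence isomorphisms) and maps `!_u : I ⟶ u`.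
Then every `E`-graded monad on `C` — a lax monoidal functor `E ⥤ [C,C]` given by a
functor `T : E ⥤ (C ⥤ C)`, a graded unit `ε : 𝟭 C ⟶ T_I` and graded multiplications
`gμ_{u,v,A} : T_u(T_v(A)) ⟶ T_{u⊗v}(A)` — induces an `E`-indexed monad with the same
underlying functors: unit `η̄_{u,A} = T_{!_u}(η_A)` and multiplication
`μ̄_{u,A} = T_{∇_u}(A) ∘ μ_{u,u,A}`; each `(T_u, η̄_u, μ̄_u)` is a monad on `C`. -/
theorem graded_to_indexed {C E : Type*} [Category C] [Category E] [MonoidalCategory E]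
    -- the codiagonals and the maps from the unit
    (del : ∀ u : E, u ⊗ u ⟶ u) (pt : ∀ u : E, 𝟙_ E ⟶ u)
    (del_nat : ∀ {u u' : E} (f : u ⟶ u'), (f ⊗ₘ f) ≫ del u' = del u ≫ f)
    (del_unit : del (𝟙_ E) = (λ_ (𝟙_ E)).hom)
    (del_assoc : ∀ u : E, del u ▷ u ≫ del u = (α_ u u u).hom ≫ u ◁ del u ≫ del u)
    (pt_nat : ∀ {u u' : E} (f : u ⟶ u'), pt u ≫ f = pt u')
    (pt_left : ∀ u : E, (λ_ u).inv ≫ pt u ▷ u ≫ del u = 𝟙 u)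
    (pt_right : ∀ u : E, (ρ_ u).inv ≫ u ◁ pt u ≫ del u = 𝟙 u)
    -- the graded monad
    (T : E ⥤ (C ⥤ C)) (ε : 𝟭 C ⟶ T.obj (𝟙_ E))
    (gμ : ∀ (u v : E) (A : C), (T.obj u).obj ((T.obj v).obj A) ⟶ (T.obj (u ⊗ v)).obj A)
    -- graded monad laws
    (gμ_natA : ∀ (u v : E) {A B : C} (f : A ⟶ B),
      (T.obj u).map ((T.obj v).map f) ≫ gμ u v B = gμ u v A ≫ (T.obj (u ⊗ v)).map f)
    (gμ_natu : ∀ {u u' : E} (f : u ⟶ u') (v : E) (A : C),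
      (T.map f).app ((T.obj v).obj A) ≫ gμ u' v A = gμ u v A ≫ (T.map (f ▷ v)).app A)
    (gμ_natv : ∀ (u : E) {v v' : E} (g : v ⟶ v') (A : C),
      (T.obj u).map ((T.map g).app A) ≫ gμ u v' A = gμ u v A ≫ (T.map (u ◁ g)).app A)
    (gμ_lu : ∀ (v : E) (A : C),
      ε.app ((T.obj v).obj A) ≫ gμ (𝟙_ E) v A = (T.map (λ_ v).inv).app A)
    (gμ_ru : ∀ (v : E) (A : C),
      (T.obj v).map (ε.app A) ≫ gμ v (𝟙_ E) A = (T.map (ρ_ v).inv).app A)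
    (gμ_assoc : ∀ (u v w : E) (A : C),
      gμ u v ((T.obj w).obj A) ≫ gμ (u ⊗ v) w A =
        (T.obj u).map (gμ v w A) ≫ gμ u (v ⊗ w) A ≫ (T.map (α_ u v w).inv).app A) :
    -- for every grade u, the data (T_u, η̄_u, μ̄_u) is a monad on C
    ∀ u : E,
      -- naturality of the unit η̄_u
      (∀ {A B : C} (f : A ⟶ B),
        f ≫ (ε.app B ≫ (T.map (pt u)).app B) =
          (ε.app A ≫ (T.map (pt u)).app A) ≫ (T.obj u).map f) ∧
      -- naturality of the multiplication μ̄_u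
      (∀ {A B : C} (f : A ⟶ B),
        (T.obj u).map ((T.obj u).map f) ≫ (gμ u u B ≫ (T.map (del u)).app B) =
          (gμ u u A ≫ (T.map (del u)).app A) ≫ (T.obj u).map f) ∧
      -- left unit law
      (∀ A : C,
        (ε.app ((T.obj u).obj A) ≫ (T.map (pt u)).app ((T.obj u).obj A)) ≫
          (gμ u u A ≫ (T.map (del u)).app A) = 𝟙 ((T.obj u).obj A)) ∧
      -- right unit law
      (∀ A : C,
        (T.obj u).map (ε.app A ≫ (T.map (pt u)).app A) ≫
          (gμ u u A ≫ (T.map (del u)).app A) = 𝟙 ((T.obj u).obj A)) ∧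
      -- associativity law
      (∀ A : C,
        (T.obj u).map (gμ u u A ≫ (T.map (del u)).app A) ≫
          (gμ u u A ≫ (T.map (del u)).app A) =
        (gμ u u ((T.obj u).obj A) ≫ (T.map (del u)).app ((T.obj u).obj A)) ≫
          (gμ u u A ≫ (T.map (del u)).app A)) := by
  intro u
  refine ⟨?_, ?_, ?_, ?_, ?_⟩
  · intro A B f
    have h1 := ε.naturality f
    have h2 := (T.map (pt u)).naturality f
    simp only [Functor.id_map] at h1
    simp only [Category.assoc, ← h2, reassoc_of% h1]
  · intro A B f
    have h2 := (T.map (del u)).naturality f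
    simp only [Category.assoc, ← h2, reassoc_of% (gμ_natA u u f)]
  · intro A
    have h1 := gμ_natu (pt u) u A
    have h2 := gμ_lu u A
    calc (ε.app ((T.obj u).obj A) ≫ (T.map (pt u)).app ((T.obj u).obj A)) ≫
          (gμ u u A ≫ (T.map (del u)).app A)
        = ε.app ((T.obj u).obj A) ≫ ((T.map (pt u)).app ((T.obj u).obj A) ≫ gμ u u A) ≫
            (T.map (del u)).app A := by simp only [Category.assoc]
      _ = (ε.app ((T.obj u).obj A) ≫ gμ (𝟙_ E) u A) ≫ (T.map (pt u ▷ u)).app A ≫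
            (T.map (del u)).app A := by rw [h1]; simp only [Category.assoc]
      _ = (T.map ((λ_ u).inv ≫ pt u ▷ u ≫ del u)).app A := by
            rw [h2]; simp only [T.map_comp, NatTrans.comp_app, Category.assoc]
      _ = 𝟙 _ := by rw [pt_left u]; simp
  · intro A
    have h1 := gμ_natv u (pt u) A
    have h2 := gμ_ru u A
    calc (T.obj u).map (ε.app A ≫ (T.map (pt u)).app A) ≫ (gμ u u A ≫ (T.map (del u)).app A)
        = (T.obj u).map (ε.app A) ≫ ((T.obj u).map ((T.map (pt u)).app A) ≫ gμ u u A) ≫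
            (T.map (del u)).app A := by simp only [Functor.map_comp, Category.assoc]
      _ = ((T.obj u).map (ε.app A) ≫ gμ u (𝟙_ E) A) ≫ (T.map (u ◁ pt u)).app A ≫
            (T.map (del u)).app A := by rw [h1]; simp only [Category.assoc]
      _ = (T.map ((ρ_ u).inv ≫ u ◁ pt u ≫ del u)).app A := by
            rw [h2]; simp only [T.map_comp, NatTrans.comp_app, Category.assoc]
      _ = 𝟙 _ := by rw [pt_right u]; simp
  · intro A
    have h1 := gμ_natv u (del u) A
    have h2 := gμ_assoc u u u A
    have h3 := gμ_natu (del u) u A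
    calc (T.obj u).map (gμ u u A ≫ (T.map (del u)).app A) ≫ (gμ u u A ≫ (T.map (del u)).app A)
        = (T.obj u).map (gμ u u A) ≫ ((T.obj u).map ((T.map (del u)).app A) ≫ gμ u u A) ≫
            (T.map (del u)).app A := by simp only [Functor.map_comp, Category.assoc]
      _ = ((T.obj u).map (gμ u u A) ≫ gμ u (u ⊗ u) A ≫ (T.map (α_ u u u).inv).app A) ≫
            (T.map ((α_ u u u).hom ≫ u ◁ del u ≫ del u)).app A := by
            rw [h1]; simp only [T.map_comp, NatTrans.comp_app, Category.assoc]
            congr 2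
            rw [← NatTrans.comp_app_assoc, ← T.map_comp, Iso.inv_hom_id, T.map_id,
              NatTrans.id_app, Category.id_comp]
      _ = (gμ u u ((T.obj u).obj A) ≫ gμ (u ⊗ u) u A) ≫
            (T.map (del u ▷ u ≫ del u)).app A := by rw [← h2, ← del_assoc u]
      _ = gμ u u ((T.obj u).obj A) ≫ ((T.map (del u)).app ((T.obj u).obj A) ≫ gμ u u A) ≫
            (T.map (del u)).app A := by
            rw [h3]; simp only [T.map_comp, NatTrans.comp_app, Category.assoc]
      _ = (gμ u u ((T.obj u).obj A) ≫ (T.map (del u)).app ((T.obj u).obj A)) ≫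
            (gμ u u A ≫ (T.map (del u)).app A) := by simp only [Category.assoc]
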